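/- arXiv:2604.00089 — 6 statements merged into one kernel-verified Lean document; each statement's English description precedes it below -/
import Mathlib

section
/- Let N be an SNFC channel on a finite alphabet X with support graph S_N, and let β be a natural number. Then the following are equivalent: (1) there exist an encoding P : X → Fin β and a decoder D : X × Fin β → Option X such that (conclusiveness) whenever D (y, c) = some x, every x' ∈ X with P x' = c and N y x' > 0 satisfies x' = x, and (completeness) D (x, P x) = some x for every x ∈ X; (2) there exists P : X → Fin β such that for all distinct x, x' ∈ X, P x = P x' implies N x x' = 0; (3) the chromatic number of S_N is at most β. Consequently, the minimum size of a perfect classical assisting channel achieving conclusive identification of all |X| inputs equals the chromatic number χ(S_N). -/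
/-- For an SNFC channel `N` with support graph `SN`, the following
are equivalent for every `β`: (1) existence of an encoding `P : X → Fin β` and a
conclusive and complete decoder `D`; (2) existence of `P : X → Fin β` such that
equal colors force `N x x' = 0` for distinct inputs; (3) `χ(SN) ≤ β`.
Consequently, the minimum size of a perfect classical assisting channel achieving
conclusive identification of all inputs equals the chromatic number of `SN`. -/
theorem stmt_1 {X : Type*} [Fintype X] [DecidableEq X]
    (N : X → X → ℝ)
    (hnn : ∀ x y : X, 0 ≤ N y x)
    (hsum : ∀ x : X, ∑ y, N y x = 1)
    (hsym : ∀ x y : X, N y x = 0 ↔ N x y = 0)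
    (hdiag : ∀ x : X, 0 < N x x)
    (SN : SimpleGraph X)
    (hSN : ∀ x x' : X, SN.Adj x x' ↔ (x ≠ x' ∧ 0 < N x' x)) :
    (∀ β : ℕ,
      ((∃ (P : X → Fin β) (D : X × Fin β → Option X),
          (∀ (y : X) (c : Fin β) (x : X), D (y, c) = some x →
            ∀ x' : X, P x' = c → 0 < N y x' → x' = x) ∧
          (∀ x : X, D (x, P x) = some x)) ↔
        (∃ P : X → Fin β, ∀ x x' : X, x ≠ x' → P x = P x' → N x x' = 0)) ∧
      ((∃ P : X → Fin β, ∀ x x' : X, x ≠ x' → P x = P x' → N x x' = 0) ↔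
        SN.chromaticNumber ≤ (β : ℕ∞))) ∧
    SN.chromaticNumber =
      ⨅ β ∈ {β : ℕ | ∃ (P : X → Fin β) (D : X × Fin β → Option X),
          (∀ (y : X) (c : Fin β) (x : X), D (y, c) = some x →
            ∀ x' : X, P x' = c → 0 < N y x' → x' = x) ∧
          (∀ x : X, D (x, P x) = some x)}, (β : ℕ∞) := by
  classical
  have main : ∀ β : ℕ,
      ((∃ (P : X → Fin β) (D : X × Fin β → Option X),
          (∀ (y : X) (c : Fin β) (x : X), D (y, c) = some x →
            ∀ x' : X, P x' = c → 0 < N y x' → x' = x) ∧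
          (∀ x : X, D (x, P x) = some x)) ↔
        (∃ P : X → Fin β, ∀ x x' : X, x ≠ x' → P x = P x' → N x x' = 0)) ∧
      ((∃ P : X → Fin β, ∀ x x' : X, x ≠ x' → P x = P x' → N x x' = 0) ↔
        SN.chromaticNumber ≤ (β : ℕ∞)) := by
    intro β
    constructor
    · constructor
      · rintro ⟨P, D, hconc, hcomp⟩
        refine ⟨P, fun x x' hne hPP => ?_⟩
        by_contra hne0
        have hpos : 0 < N x x' := lt_of_le_of_ne (hnn x' x) (Ne.symm hne0)
        have := hconc x (P x) x (hcomp x) x' hPP.symm hpos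
        exact hne this.symm
      · rintro ⟨P, hP⟩
        refine ⟨P, fun yc =>
          if h : ∃ x, P x = yc.2 ∧ 0 < N yc.1 x ∧
              ∀ x', P x' = yc.2 → 0 < N yc.1 x' → x' = x
          then some h.choose else none, ?_, ?_⟩
        · intro y c x hD x' hPx' hpos
          simp only at hD
          split_ifs at hD with h
          · have hspec := h.choose_spec
            have : h.choose = x := by simpa using hD
            subst this
            exact hspec.2.2 x' hPx' hpos
        · intro x
          have hx : ∃ z, P z = P x ∧ 0 < N x z ∧
              ∀ x', P x' = P x → 0 < N x x' → x' = z := by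
            refine ⟨x, rfl, hdiag x, fun x' hPx' hpos => ?_⟩
            by_contra hne
            exact absurd (hP x x' (fun h => hne h.symm) hPx'.symm) hpos.ne'
          simp only [dif_pos hx]
          have hspec := hx.choose_spec
          have : x = hx.choose := hspec.2.2 x rfl (hdiag x)
          exact congrArg some this.symm
    · constructor
      · rintro ⟨P, hP⟩
        rw [SimpleGraph.chromaticNumber_le_iff_colorable]
        refine ⟨SimpleGraph.Coloring.mk P fun {x x'} hadj => ?_⟩
        obtain ⟨hne, hpos⟩ := (hSN x x').mp hadj
        intro hPP
        exact hpos.ne' (hP x' x (Ne.symm hne) hPP.symm)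
      · intro h
        obtain ⟨C⟩ := SimpleGraph.chromaticNumber_le_iff_colorable.mp h
        refine ⟨C, fun x x' hne hPP => ?_⟩
        by_contra hne0
        have hpos : 0 < N x x' := lt_of_le_of_ne (hnn x' x) (Ne.symm hne0)
        have hadj : SN.Adj x' x := (hSN x' x).mpr ⟨Ne.symm hne, hpos⟩
        exact C.valid hadj hPP.symm
  refine ⟨main, ?_⟩
  have hmem : ∀ β : ℕ, β ∈ {β : ℕ | ∃ (P : X → Fin β) (D : X × Fin β → Option X),
          (∀ (y : X) (c : Fin β) (x : X), D (y, c) = some x →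
            ∀ x' : X, P x' = c → 0 < N y x' → x' = x) ∧
          (∀ x : X, D (x, P x) = some x)} ↔ SN.chromaticNumber ≤ (β : ℕ∞) := by
    intro β
    exact (main β).1.trans (main β).2
  apply le_antisymm
  · exact le_iInf₂ fun β hβ => (hmem β).mp hβ
  · have hfin : SN.chromaticNumber ≠ ⊤ := by
      have : SN.chromaticNumber ≤ (Fintype.card X : ℕ∞) := by
        rw [SimpleGraph.chromaticNumber_le_iff_colorable]
        exact SN.colorable_of_fintype
      exact ne_top_of_le_ne_top (WithTop.natCast_ne_top _) this
    obtain ⟨m, hm⟩ := WithTop.ne_top_iff_exists.mp hfin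
    calc (⨅ β ∈ {β : ℕ | ∃ (P : X → Fin β) (D : X × Fin β → Option X),
          (∀ (y : X) (c : Fin β) (x : X), D (y, c) = some x →
            ∀ x' : X, P x' = c → 0 < N y x' → x' = x) ∧
          (∀ x : X, D (x, P x) = some x)}, (β : ℕ∞))
        ≤ (m : ℕ∞) := biInf_le _ ((hmem m).mpr hm.ge)
      _ = SN.chromaticNumber := hm
end

section
/- Consider the nine 4-element subsets of Fin 18 given by C₁ = {1,2,3,4}, C₂ = {4,5,6,7}, C₃ = {7,8,9,10}, C₄ = {10,11,12,13}, C₅ = {13,14,15,16}, C₆ = {16,17,18,1}, C₇ = {2,9,11,18}, C₈ = {3,5,12,14}, C₉ = {6,8,15,17} (the contexts of the Cabello 18-vector Kochen–Specker system in ℂ⁴). Every element of Fin 18 belongs to exactly two of these nine contexts, and there is no function f : Fin 18 → Bool such that each of the nine contexts contains exactly one element assigned true. -/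
/-- The nine contexts of the Cabello 18-vector Kochen–Specker system, as subsets of
`Fin 18` (labels taken mod 18, so the label `18` is `0`). -/
def cabelloContexts : Fin 9 → Finset (Fin 18) :=
  ![{1, 2, 3, 4}, {4, 5, 6, 7}, {7, 8, 9, 10}, {10, 11, 12, 13}, {13, 14, 15, 16},
    {16, 17, 18, 1}, {2, 9, 11, 18}, {3, 5, 12, 14}, {6, 8, 15, 17}]

lemma cabello_two : ∀ v : Fin 18,
    (Finset.univ.filter (fun j : Fin 9 => v ∈ cabelloContexts j)).card = 2 := by decide

/-- Every element of `Fin 18` belongs to exactly two of the nine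
Cabello contexts, and there is no `f : Fin 18 → Bool` assigning exactly one `true`
in each context. -/
theorem stmt_10 :
    (∀ v : Fin 18, (Finset.univ.filter (fun j : Fin 9 => v ∈ cabelloContexts j)).card = 2) ∧
    ¬ ∃ f : Fin 18 → Bool, ∀ j : Fin 9,
        ((cabelloContexts j).filter (fun v => f v = true)).card = 1 := by
  refine ⟨cabello_two, ?_⟩
  rintro ⟨f, hf⟩
  have h9 : ∑ j : Fin 9, ((cabelloContexts j).filter (fun v => f v = true)).card = 9 := by
    simp [hf]
  have hcalc : ∑ j : Fin 9, ((cabelloContexts j).filter (fun v => f v = true)).card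
      = ∑ v : Fin 18, if f v = true then 2 else 0 := by
    calc ∑ j : Fin 9, ((cabelloContexts j).filter (fun v => f v = true)).card
        = ∑ j : Fin 9, ∑ v : Fin 18,
            if v ∈ cabelloContexts j ∧ f v = true then 1 else 0 := by
          refine Finset.sum_congr rfl fun j _ => ?_
          rw [Finset.card_filter,
            show cabelloContexts j = Finset.univ.filter (· ∈ cabelloContexts j) from
              (Finset.filter_univ_mem _).symm, Finset.sum_filter]
          simp [ite_and]
      _ = ∑ v : Fin 18, ∑ j : Fin 9,
            if v ∈ cabelloContexts j ∧ f v = true then 1 else 0 := Finset.sum_comm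
      _ = ∑ v : Fin 18, if f v = true then 2 else 0 := by
          refine Finset.sum_congr rfl fun v _ => ?_
          by_cases hv : f v = true
          · simp only [hv, and_true, if_true]
            rw [← cabello_two v, Finset.card_filter]
          · simp [hv]
  rw [hcalc] at h9
  have h2 : ∑ v : Fin 18, (if f v = true then 2 else 0)
      = 2 * ∑ v : Fin 18, (if f v = true then 1 else 0) := by
    rw [Finset.mul_sum]
    exact Finset.sum_congr rfl fun v _ => by split <;> simp
  omega
end

section
/- Let v₁, …, v₁₈ be the vectors in ℝ⁴ given by v₁=(1,0,0,0), v₂=(0,1,0,0), v₃=(0,0,1,1), v₄=(0,0,1,−1), v₅=(1,−1,0,0), v₆=(1,1,−1,−1), v₇=(1,1,1,1), v₈=(1,−1,1,−1), v₉=(1,0,−1,0), v₁₀=(0,1,0,−1), v₁₁=(1,0,1,0), v₁₂=(1,1,−1,1), v₁₃=(−1,1,1,1), v₁₄=(1,1,1,−1), v₁₅=(1,0,0,1), v₁₆=(0,1,−1,0), v₁₇=(0,1,1,0), v₁₈=(0,0,0,1), and let KS⁴₁₈ be the simple graph on Fin 18 in which distinct i, j are adjacent iff the dot product of vᵢ and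 vⱼ is 0. Then: (a) the chromatic number of KS⁴₁₈ equals 5; and (b) any two distinct vertices of KS⁴₁₈ are adjacent or have a common neighbor, i.e. KS⁴₁₈ has diameter at most 2 (and it is not complete, so its diameter is exactly 2). -/
/-- The orthogonality graph of a finite list of vectors in `ℝ^d`: distinct indices
are adjacent iff the corresponding vectors have dot product `0`. -/
def orthoGraph {m d : ℕ} (v : Fin m → Fin d → ℝ) : SimpleGraph (Fin m) where
  Adj i j := i ≠ j ∧ ∑ a, v i a * v j a = 0
  symm := by
    constructor
    rintro i j ⟨hne, hdot⟩
    refine ⟨hne.symm, ?_⟩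
    rw [Finset.sum_congr rfl fun a _ => mul_comm (v j a) (v i a)]
    exact hdot
  loopless := by constructor; rintro i ⟨h, -⟩; exact h rfl

/-- The 18 vectors of the Cabello–Estebaranz–García-Alcaine Kochen–Specker system in
`ℝ⁴` (index `i : Fin 18` corresponds to `v_{i+1}`). -/
def cabelloVecs : Fin 18 → Fin 4 → ℝ :=
  ![![1, 0, 0, 0], ![0, 1, 0, 0], ![0, 0, 1, 1], ![0, 0, 1, -1], ![1, -1, 0, 0],
    ![1, 1, -1, -1], ![1, 1, 1, 1], ![1, -1, 1, -1], ![1, 0, -1, 0], ![0, 1, 0, -1],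
    ![1, 0, 1, 0], ![1, 1, -1, 1], ![-1, 1, 1, 1], ![1, 1, 1, -1], ![1, 0, 0, 1],
    ![0, 1, -1, 0], ![0, 1, 1, 0], ![0, 0, 0, 1]]

/-- Integer twin of `cabelloVecs`, for decidability. -/
def ivKS : Fin 18 → Fin 4 → ℤ :=
  ![![1, 0, 0, 0], ![0, 1, 0, 0], ![0, 0, 1, 1], ![0, 0, 1, -1], ![1, -1, 0, 0],
    ![1, 1, -1, -1], ![1, 1, 1, 1], ![1, -1, 1, -1], ![1, 0, -1, 0], ![0, 1, 0, -1],
    ![1, 0, 1, 0], ![1, 1, -1, 1], ![-1, 1, 1, 1], ![1, 1, 1, -1], ![1, 0, 0, 1],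
    ![0, 1, -1, 0], ![0, 1, 1, 0], ![0, 0, 0, 1]]

/-- Decidable adjacency relation over the integers. -/
def adjZ (i j : Fin 18) : Prop := i ≠ j ∧ ∑ a, ivKS i a * ivKS j a = 0

instance (i j : Fin 18) : Decidable (adjZ i j) := by unfold adjZ; infer_instance

lemma cab_eq_iv (i : Fin 18) (a : Fin 4) : cabelloVecs i a = ((ivKS i a : ℤ) : ℝ) := by
  fin_cases i <;> fin_cases a <;> norm_num [cabelloVecs, ivKS]

lemma adj_iff (i j : Fin 18) : (orthoGraph cabelloVecs).Adj i j ↔ adjZ i j := by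
  have hd : ∑ a, cabelloVecs i a * cabelloVecs j a = ((∑ a, ivKS i a * ivKS j a : ℤ) : ℝ) := by
    push_cast
    exact Finset.sum_congr rfl fun a _ => by rw [cab_eq_iv, cab_eq_iv]
  constructor
  · rintro ⟨hne, h⟩
    refine ⟨hne, ?_⟩
    rw [hd] at h
    exact_mod_cast h
  · rintro ⟨hne, h⟩
    refine ⟨hne, ?_⟩
    rw [hd]
    exact_mod_cast h

/-- The nine orthogonal bases of the Cabello system. -/
def basesKS : Fin 9 → Finset (Fin 18) :=
  ![{0, 1, 2, 3}, {0, 15, 16, 17}, {1, 8, 10, 17}, {2, 4, 11, 13}, {3, 4, 5, 6},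
    {5, 7, 14, 16}, {6, 7, 8, 9}, {9, 10, 11, 12}, {12, 13, 14, 15}]

lemma bases_clique : ∀ b : Fin 9, ∀ i ∈ basesKS b, ∀ j ∈ basesKS b, i ≠ j → adjZ i j := by
  decide

lemma bases_count : ∀ i : Fin 18, (Finset.univ.filter fun b => i ∈ basesKS b).card = 2 := by
  decide

lemma bases_card : ∀ b : Fin 9, (basesKS b).card = 4 := by decide

lemma not_colorable_four : ¬ (orthoGraph cabelloVecs).Colorable 4 := by
  rintro ⟨C⟩
  -- in every basis, exactly one vertex has color 0
  have key : ∀ b : Fin 9, (∑ i ∈ basesKS b, if C i = 0 then 1 else 0) = 1 := by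
    intro b
    have hinj : Set.InjOn C (basesKS b) := by
      intro i hi j hj hij
      by_contra hne
      exact C.valid ((adj_iff i j).2 (bases_clique b i hi j hj hne)) hij
    have himg : (basesKS b).image C = Finset.univ := by
      apply Finset.eq_univ_of_card
      rw [Finset.card_image_of_injOn hinj, bases_card]
      simp
    obtain ⟨i₀, hi₀, hci₀⟩ := Finset.mem_image.1 (himg ▸ Finset.mem_univ (0 : Fin 4))
    have hfilter : (basesKS b).filter (fun i => C i = 0) = {i₀} := by
      ext j
      simp only [Finset.mem_filter, Finset.mem_singleton]
      constructor
      · rintro ⟨hj, hcj⟩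
        exact hinj hj hi₀ (hcj.trans hci₀.symm)
      · rintro rfl; exact ⟨hi₀, hci₀⟩
    rw [Finset.sum_boole, hfilter]
    simp
  have count1 : (∑ b : Fin 9, ∑ i ∈ basesKS b, if C i = 0 then 1 else 0) = 9 := by
    rw [Finset.sum_congr rfl fun b _ => key b]; simp
  have count2 : (∑ b : Fin 9, ∑ i ∈ basesKS b, if C i = 0 then 1 else 0)
      = 2 * ∑ i : Fin 18, (if C i = 0 then 1 else 0) := by
    have h1 : ∀ b : Fin 9, (∑ i ∈ basesKS b, if C i = 0 then 1 else 0)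
        = ∑ i : Fin 18, if i ∈ basesKS b then (if C i = 0 then 1 else 0) else 0 := by
      intro b
      rw [Finset.sum_ite_mem, Finset.univ_inter]
    rw [Finset.sum_congr rfl fun b _ => h1 b, Finset.sum_comm, Finset.mul_sum]
    refine Finset.sum_congr rfl fun i _ => ?_
    rw [← Finset.sum_filter, Finset.sum_const, bases_count i, smul_eq_mul]
  rw [count1] at count2
  omega

/-- An explicit proper 5-coloring. -/
def col5 : Fin 18 → Fin 5 :=
  ![0, 1, 2, 3, 0, 1, 2, 0, 3, 1, 0, 3, 2, 1, 4, 3, 2, 4]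

lemma col5_valid : ∀ i j : Fin 18, adjZ i j → col5 i ≠ col5 j := by decide

lemma colorable_five : (orthoGraph cabelloVecs).Colorable 5 :=
  ⟨⟨col5, fun {i j} h => col5_valid i j ((adj_iff i j).1 h)⟩⟩

lemma dist2 : ∀ i j : Fin 18, i ≠ j →
    (adjZ i j ∨ ∃ k : Fin 18, adjZ i k ∧ adjZ k j) := by decide

lemma not_adj_04 : ¬ adjZ 0 4 := by decide

/-- The orthogonality graph `KS⁴₁₈` of the 18 Cabello vectors has
chromatic number `5`; any two distinct vertices are adjacent or share a common
neighbor (diameter at most 2); and the graph is not complete (so its diameter is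
exactly 2). -/
theorem stmt_11 :
    (orthoGraph cabelloVecs).chromaticNumber = 5 ∧
    (∀ i j : Fin 18, i ≠ j →
      ((orthoGraph cabelloVecs).Adj i j ∨
        ∃ k : Fin 18, (orthoGraph cabelloVecs).Adj i k ∧ (orthoGraph cabelloVecs).Adj k j)) ∧
    (∃ i j : Fin 18, i ≠ j ∧ ¬ (orthoGraph cabelloVecs).Adj i j) ∧
    (orthoGraph cabelloVecs).ediam = 2 := by
  set G := orthoGraph cabelloVecs with hG
  have hdist : ∀ i j : Fin 18, i ≠ j →
      (G.Adj i j ∨ ∃ k : Fin 18, G.Adj i k ∧ G.Adj k j) := by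
    intro i j hij
    rcases dist2 i j hij with h | ⟨k, h1, h2⟩
    · exact Or.inl ((adj_iff i j).2 h)
    · exact Or.inr ⟨k, (adj_iff i k).2 h1, (adj_iff k j).2 h2⟩
  have hna : ¬ G.Adj 0 4 := fun h => not_adj_04 ((adj_iff 0 4).1 h)
  have h04 : (0 : Fin 18) ≠ 4 := by decide
  -- chromatic number
  have hchrom : G.chromaticNumber = 5 := by
    refine le_antisymm ?_ ?_
    · have := colorable_five.chromaticNumber_le
      exact_mod_cast this
    · by_contra hlt
      push_neg at hlt
      have h5 : G.chromaticNumber < ((4 : ℕ) : ℕ∞) + 1 := by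
        have e45 : ((4 : ℕ) : ℕ∞) + 1 = 5 := by norm_num
        rw [e45]
        exact hlt
      have h4 : G.chromaticNumber ≤ ((4 : ℕ) : ℕ∞) := Order.le_of_lt_add_one h5
      exact not_colorable_four (SimpleGraph.chromaticNumber_le_iff_colorable.1 h4)
  refine ⟨hchrom, hdist, ⟨0, 4, h04, hna⟩, ?_⟩
  -- diameter
  have hle : ∀ u v : Fin 18, G.edist u v ≤ 2 := by
    intro u v
    by_cases huv : u = v
    · subst huv; simp [SimpleGraph.edist_self]
    · rcases hdist u v huv with h | ⟨k, h1, h2⟩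
      · calc G.edist u v = 1 := SimpleGraph.edist_eq_one_iff_adj.2 h
          _ ≤ 2 := by norm_num
      · have : G.edist u v ≤ (SimpleGraph.Walk.cons h1 (SimpleGraph.Walk.cons h2
          SimpleGraph.Walk.nil)).length := SimpleGraph.edist_le _
        simpa using this
  have hedist04 : G.edist 0 4 = 2 := by
    have h2 : G.edist 0 4 ≤ 2 := hle 0 4
    have h0 : G.edist 0 4 ≠ 0 := by
      simp [SimpleGraph.edist_eq_zero_iff, h04]
    have h1 : G.edist 0 4 ≠ 1 := fun h => hna (SimpleGraph.edist_eq_one_iff_adj.1 h)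
    have hne : G.edist 0 4 ≠ ⊤ := ne_top_of_le_ne_top (by simp) h2
    lift G.edist 0 4 to ℕ using hne with n hn
    have hn2 : n ≤ 2 := by exact_mod_cast h2
    have hn0 : n ≠ 0 := fun h => h0 (by exact_mod_cast congrArg (Nat.cast : ℕ → ℕ∞) h)
    have hn1 : n ≠ 1 := fun h => h1 (by exact_mod_cast congrArg (Nat.cast : ℕ → ℕ∞) h)
    have : n = 2 := by omega
    exact_mod_cast congrArg (Nat.cast : ℕ → ℕ∞) this
  refine le_antisymm (SimpleGraph.ediam_le_of_edist_le hle) ?_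
  rw [← hedist04]
  exact SimpleGraph.edist_le_ediam
end

section
/- Let w₁, …, w₁₄ be the vectors in ℝ⁴ obtained by appending a fourth coordinate 0 to the thirteen Yu–Oh vectors v₁=(1,0,0), v₂=(0,1,0), v₃=(0,0,1), v₄=(0,1,1), v₅=(0,1,−1), v₆=(1,0,1), v₇=(1,0,−1), v₈=(1,1,0), v₉=(1,−1,0), v₁₀=(1,1,1), v₁₁=(−1,1,1), v₁₂=(1,−1,1), v₁₃=(1,1,−1), together with w₁₄=(0,0,0,1). Let YO⁴₁₄ be the simple graph on Fin 14 in which distinct i, j are adjacent iff the dot product of wᵢ and wⱼ is 0 (so w₁₄ is adjacent to all other vertices). Then: (a) the chromatic number of YO⁴₁₄ equals 5; and (b) any two distinct vertices of YO⁴₁₄ are adjacent or have a common neighbor, i.e. YO⁴₁₄ has diameter at most 2 (and it is not complete, so its diameter is exactly 2). -/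
/-- The 14 vectors in `ℝ⁴`: the thirteen Yu–Oh vectors with a fourth coordinate `0`
appended, together with `w₁₄ = (0,0,0,1)` (index `i : Fin 14` corresponds to
`w_{i+1}`). -/
def yuOh14Vecs : Fin 14 → Fin 4 → ℝ :=
  ![![1, 0, 0, 0], ![0, 1, 0, 0], ![0, 0, 1, 0], ![0, 1, 1, 0], ![0, 1, -1, 0],
    ![1, 0, 1, 0], ![1, 0, -1, 0], ![1, 1, 0, 0], ![1, -1, 0, 0], ![1, 1, 1, 0],
    ![-1, 1, 1, 0], ![1, -1, 1, 0], ![1, 1, -1, 0], ![0, 0, 0, 1]]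

namespace YO14

def edges14 : List (Fin 14 × Fin 14) :=
  [(0,1),(0,2),(0,3),(0,4),(1,2),(1,5),(1,6),(2,7),(2,8),(3,4),(3,11),(3,12),
   (4,9),(4,10),(5,6),(5,10),(5,12),(6,9),(6,11),(7,8),(7,10),(7,11),(8,9),(8,12),
   (0,13),(1,13),(2,13),(3,13),(4,13),(5,13),(6,13),(7,13),(8,13),(9,13),(10,13),
   (11,13),(12,13)]

def adjP (i j : Fin 14) : Bool :=
  edges14.any (fun e => (e.1 == i && e.2 == j) || (e.1 == j && e.2 == i))

def G' : SimpleGraph (Fin 14) where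
  Adj i j := adjP i j = true
  symm := by
    have : ∀ i j : Fin 14, adjP i j = true → adjP j i = true := by decide
    exact ⟨fun i j h => this i j h⟩
  loopless := by
    have : ∀ i : Fin 14, ¬ adjP i i = true := by decide
    exact ⟨fun i h => this i h⟩

instance : DecidableRel G'.Adj := fun i j => inferInstanceAs (Decidable (adjP i j = true))

set_option maxHeartbeats 2000000 in
theorem graph_eq : orthoGraph yuOh14Vecs = G' := by
  ext i j
  show (i ≠ j ∧ ∑ a, yuOh14Vecs i a * yuOh14Vecs j a = 0) ↔ adjP i j = true
  fin_cases i <;> fin_cases j <;>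
    simp only [yuOh14Vecs, Fin.sum_univ_four, Matrix.cons_val', Matrix.cons_val_zero,
      Matrix.cons_val_one, Matrix.head_cons, Matrix.cons_val_fin_one, Matrix.empty_val',
      Matrix.head_fin_const, Matrix.cons_val_succ, Matrix.cons_val] <;>
    norm_num <;> decide

/-- the pruned exhaustive search: no normalized proper 3-coloring exists -/
theorem key : ∀ a : Fin 3, a ≠ 0 → ∀ b : Fin 3, b ≠ 0 → a ≠ b →
    ∀ c : Fin 3, c ≠ 1 → ∀ d : Fin 3, d ≠ 1 → c ≠ d →
    ∀ e : Fin 3, e ≠ 2 → ∀ f : Fin 3, f ≠ 2 → e ≠ f →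
    ∀ g : Fin 3, b ≠ g → d ≠ g → f ≠ g →
    ∀ h : Fin 3, b ≠ h → c ≠ h → e ≠ h →
    ∀ i : Fin 3, a ≠ i → d ≠ i → e ≠ i →
    ∀ j : Fin 3, a ≠ j → c ≠ j → f ≠ j → False := by decide

theorem perm3 : ∀ x y z : Fin 3, x ≠ y → x ≠ z → y ≠ z →
    ∃ τ : Equiv.Perm (Fin 3), τ x = 0 ∧ τ y = 1 ∧ τ z = 2 := by decide

theorem colorable5 : G'.Colorable 5 :=
  ⟨SimpleGraph.Coloring.mk ![0,1,2,1,2,0,2,0,1,0,1,3,2,4] (by decide)⟩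

theorem not_colorable4 : ¬ G'.Colorable 4 := by
  rintro ⟨C⟩
  set σ := Equiv.swap (C 13) 3 with hσ
  have hlt : ∀ i : Fin 13, (σ (C i.castSucc)).val < 3 := by
    intro i
    have hadj : G'.Adj i.castSucc 13 := by revert i; decide
    have hne : C i.castSucc ≠ C 13 := C.valid hadj
    have h3 : σ (C i.castSucc) ≠ 3 := by
      intro h
      exact hne (σ.injective (h.trans (Equiv.swap_apply_left (C 13) 3).symm))
    have := (σ (C i.castSucc)).isLt
    have hv : (σ (C i.castSucc)).val ≠ 3 := fun hv => h3 (Fin.ext hv)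
    omega
  set D : Fin 13 → Fin 3 := fun i => ⟨(σ (C i.castSucc)).val, hlt i⟩ with hD
  have hDne : ∀ i j : Fin 13, G'.Adj i.castSucc j.castSucc → D i ≠ D j := by
    intro i j hadj hEq
    have hv : ∀ k, (D k : ℕ) = (σ (C k.castSucc)).val := fun k => rfl
    have : (σ (C i.castSucc)).val = (σ (C j.castSucc)).val := by
      rw [← hv, ← hv, hEq]
    exact C.valid hadj (σ.injective (Fin.ext this))
  obtain ⟨τ, h0, h1, h2⟩ := perm3 (D 0) (D 1) (D 2)
    (hDne 0 1 (by decide)) (hDne 0 2 (by decide)) (hDne 1 2 (by decide))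
  set F : Fin 13 → Fin 3 := fun i => τ (D i) with hF
  have hFne : ∀ i j : Fin 13, G'.Adj i.castSucc j.castSucc → F i ≠ F j :=
    fun i j h hf => hDne i j h (τ.injective hf)
  exact key (F 3) (fun h => hFne 0 3 (by decide) (h0.trans h.symm))
    (F 4) (fun h => hFne 0 4 (by decide) (h0.trans h.symm))
    (hFne 3 4 (by decide))
    (F 5) (fun h => hFne 1 5 (by decide) (h1.trans h.symm))
    (F 6) (fun h => hFne 1 6 (by decide) (h1.trans h.symm))
    (hFne 5 6 (by decide))
    (F 7) (fun h => hFne 2 7 (by decide) (h2.trans h.symm))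
    (F 8) (fun h => hFne 2 8 (by decide) (h2.trans h.symm))
    (hFne 7 8 (by decide))
    (F 9) (hFne 4 9 (by decide)) (hFne 6 9 (by decide)) (hFne 8 9 (by decide))
    (F 10) (hFne 4 10 (by decide)) (hFne 5 10 (by decide)) (hFne 7 10 (by decide))
    (F 11) (hFne 3 11 (by decide)) (hFne 6 11 (by decide)) (hFne 7 11 (by decide))
    (F 12) (hFne 3 12 (by decide)) (hFne 5 12 (by decide)) (hFne 8 12 (by decide))

theorem chrom : G'.chromaticNumber = 5 := by
  refine le_antisymm (by exact_mod_cast colorable5.chromaticNumber_le) ?_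
  by_contra h
  push_neg at h
  have h5 : G'.chromaticNumber < (4 : ℕ∞) + 1 := by
    have : ((4 : ℕ∞) + 1) = 5 := by norm_num
    rw [this]; exact h
  have h4 : G'.chromaticNumber ≤ 4 :=
    (ENat.lt_add_one_iff (by norm_num)).mp h5
  exact not_colorable4 (SimpleGraph.chromaticNumber_le_iff_colorable.mp h4)

theorem diam2 : ∀ i j : Fin 14, i ≠ j →
    (G'.Adj i j ∨ ∃ k : Fin 14, G'.Adj i k ∧ G'.Adj k j) := by decide

theorem notadj : (0 : Fin 14) ≠ 5 ∧ ¬ G'.Adj 0 5 := by decide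

theorem ediam2 : G'.ediam = 2 := by
  refine le_antisymm ?_ ?_
  · refine SimpleGraph.ediam_le_of_edist_le fun u v => ?_
    rcases eq_or_ne u v with rfl | hne
    · simp [SimpleGraph.edist_self]
    · rcases diam2 u v hne with h | ⟨k, h1, h2⟩
      · calc G'.edist u v ≤ 1 := by
              rw [SimpleGraph.edist_eq_one_iff_adj.mpr h]
            _ ≤ 2 := by norm_num
      · have := SimpleGraph.edist_le (SimpleGraph.Walk.cons h1 h2.toWalk)
        simpa using this
  · obtain ⟨hne, hnadj⟩ := notadj
    have h0 : G'.edist 0 5 ≠ 0 := by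
      rw [Ne, SimpleGraph.edist_eq_zero_iff]; exact hne
    have h1 : G'.edist 0 5 ≠ 1 := fun h =>
      hnadj (SimpleGraph.edist_eq_one_iff_adj.mp h)
    have hlt : 1 < G'.edist 0 5 :=
      lt_of_le_of_ne (ENat.one_le_iff_ne_zero.mpr h0) (Ne.symm h1)
    have : (1 : ℕ∞) + 1 ≤ G'.edist 0 5 := Order.add_one_le_of_lt hlt
    calc (2 : ℕ∞) = 1 + 1 := by norm_num
    _ ≤ G'.edist 0 5 := this
    _ ≤ G'.ediam := SimpleGraph.edist_le_ediam

end YO14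

/-- The orthogonality graph `YO⁴₁₄` of the 14 vectors obtained from
the Yu–Oh rays by adjoining a vector orthogonal to all of them has chromatic number
`5`; any two distinct vertices are adjacent or share a common neighbor (diameter at
most 2); and the graph is not complete (so its diameter is exactly 2). -/
theorem stmt_13 :
    (orthoGraph yuOh14Vecs).chromaticNumber = 5 ∧
    (∀ i j : Fin 14, i ≠ j →
      ((orthoGraph yuOh14Vecs).Adj i j ∨
        ∃ k : Fin 14, (orthoGraph yuOh14Vecs).Adj i k ∧ (orthoGraph yuOh14Vecs).Adj k j)) ∧
    (∃ i j : Fin 14, i ≠ j ∧ ¬ (orthoGraph yuOh14Vecs).Adj i j) ∧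
    (orthoGraph yuOh14Vecs).ediam = 2 := by
  rw [YO14.graph_eq]
  exact ⟨YO14.chrom, YO14.diam2, ⟨0, 5, YO14.notadj⟩, YO14.ediam2⟩
end

section
/- Let G and H be simple graphs, let u : V(G) → (Fin d → ℂ) assign a nonzero vector to each vertex of G with ∑_a conj (u i a) * u i' a = 0 whenever i and i' are adjacent in G, and let w : V(H) → (Fin e → ℂ) assign a nonzero vector to each vertex of H with ∑_b conj (w j b) * w j' b = 0 whenever j and j' are adjacent in H. Define v : V(G) × V(H) → (Fin d × Fin e → ℂ) by v (i, j) (a, b) = u i a * w j b. Then v (i, j) is nonzero for every (i, j), and v (i, j) is orthogonal to v (i', j') whenever (i, j) and (i', j') are adjacent in the co-normal product G × H. Consequently the orthogonal rank satisfies ξ(G × H) ≤ ξ(G) · ξ(H). -/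
/-- The co-normal (disjunctive) product of two simple graphs: distinct vertices
`(i, j)` and `(i', j')` are adjacent iff `i ~ i'` in `G` or `j ~ j'` in `H`. -/
def conormalProd {α β : Type*} (G : SimpleGraph α) (H : SimpleGraph β) :
    SimpleGraph (α × β) where
  Adj x y := G.Adj x.1 y.1 ∨ H.Adj x.2 y.2
  symm := ⟨fun _ _ h => h.imp (fun h' => h'.symm) (fun h' => h'.symm)⟩
  loopless := ⟨fun x h => h.elim (fun h' => G.irrefl h') (fun h' => H.irrefl h')⟩

/-- The (complex) orthogonal rank of a simple graph: the least `d` admitting an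
assignment of nonzero vectors in `ℂ^d` to vertices with adjacent vertices receiving
orthogonal vectors. -/
noncomputable def orthRank {α : Type*} (G : SimpleGraph α) : ℕ :=
  sInf {d : ℕ | ∃ v : α → Fin d → ℂ, (∀ i, v i ≠ 0) ∧
    ∀ i j, G.Adj i j → ∑ a, (starRingEnd ℂ) (v i a) * v j a = 0}

lemma tensor_inner {d e : ℕ} (f f' : Fin d → ℂ) (g g' : Fin e → ℂ) :
    ∑ ab : Fin d × Fin e,
      (starRingEnd ℂ) (f ab.1 * g ab.2) * (f' ab.1 * g' ab.2)
    = (∑ a, (starRingEnd ℂ) (f a) * f' a) * (∑ b, (starRingEnd ℂ) (g b) * g' b) := by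
  rw [Finset.sum_mul_sum, ← Finset.sum_product']
  apply Finset.sum_congr rfl
  intro ab _
  simp [map_mul]
  ring

lemma orthSet_nonempty {α : Type*} [Fintype α] (G : SimpleGraph α) :
    {d : ℕ | ∃ v : α → Fin d → ℂ, (∀ i, v i ≠ 0) ∧
      ∀ i j, G.Adj i j → ∑ a, (starRingEnd ℂ) (v i a) * v j a = 0}.Nonempty := by
  refine ⟨Fintype.card α, fun i a => if a = Fintype.equivFin α i then 1 else 0, ?_, ?_⟩
  · intro i h
    have := congrFun h (Fintype.equivFin α i)
    simp at this
  · intro i j hij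
    have hne : Fintype.equivFin α i ≠ Fintype.equivFin α j := by
      simp [hij.ne]
    rw [Finset.sum_eq_zero]
    intro a _
    by_cases h1 : a = Fintype.equivFin α i <;> by_cases h2 : a = Fintype.equivFin α j <;>
      simp_all

/-- Tensoring orthogonal representations of `G` (in `ℂ^d`) and `H`
(in `ℂ^e`) yields an orthogonal representation of the co-normal product `G × H`
indexed by `Fin d × Fin e`: the product vectors are nonzero and adjacent vertices of
`G × H` receive orthogonal vectors. Consequently `ξ(G × H) ≤ ξ(G) · ξ(H)`. -/
theorem stmt_15 {α β : Type*} [Fintype α] [Fintype β]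
    (G : SimpleGraph α) (H : SimpleGraph β) (d e : ℕ)
    (u : α → Fin d → ℂ) (hu0 : ∀ i, u i ≠ 0)
    (hu : ∀ i i', G.Adj i i' → ∑ a, (starRingEnd ℂ) (u i a) * u i' a = 0)
    (w : β → Fin e → ℂ) (hw0 : ∀ j, w j ≠ 0)
    (hw : ∀ j j', H.Adj j j' → ∑ b, (starRingEnd ℂ) (w j b) * w j' b = 0)
    (v : α × β → Fin d × Fin e → ℂ)
    (hv : ∀ p ab, v p ab = u p.1 ab.1 * w p.2 ab.2) :
    (∀ p : α × β, v p ≠ 0) ∧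
    (∀ p q : α × β, (conormalProd G H).Adj p q →
      ∑ ab : Fin d × Fin e, (starRingEnd ℂ) (v p ab) * v q ab = 0) ∧
    orthRank (conormalProd G H) ≤ orthRank G * orthRank H := by
  refine ⟨?_, ?_, ?_⟩
  · intro p hp
    obtain ⟨a, ha⟩ := Function.ne_iff.1 (hu0 p.1)
    obtain ⟨b, hb⟩ := Function.ne_iff.1 (hw0 p.2)
    have := congrFun hp (a, b)
    rw [hv] at this
    exact mul_ne_zero ha hb (by simpa using this)
  · intro p q hpq
    have : ∑ ab : Fin d × Fin e, (starRingEnd ℂ) (v p ab) * v q ab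
        = (∑ a, (starRingEnd ℂ) (u p.1 a) * u q.1 a) *
          (∑ b, (starRingEnd ℂ) (w p.2 b) * w q.2 b) := by
      rw [← tensor_inner]
      exact Finset.sum_congr rfl fun ab _ => by rw [hv, hv]
    rw [this]
    rcases hpq with h | h
    · rw [hu _ _ h, zero_mul]
    · rw [hw _ _ h, mul_zero]
  · obtain ⟨u', hu'0, hu'⟩ := Nat.sInf_mem (orthSet_nonempty G)
    obtain ⟨w', hw'0, hw'⟩ := Nat.sInf_mem (orthSet_nonempty H)
    apply Nat.sInf_le
    refine ⟨fun p c => u' p.1 (finProdFinEquiv.symm c).1 * w' p.2 (finProdFinEquiv.symm c).2,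
      ?_, ?_⟩
    · intro p hp
      obtain ⟨a, ha⟩ := Function.ne_iff.1 (hu'0 p.1)
      obtain ⟨b, hb⟩ := Function.ne_iff.1 (hw'0 p.2)
      have := congrFun hp (finProdFinEquiv (a, b))
      simp only [Equiv.symm_apply_apply] at this
      exact mul_ne_zero ha hb (by simpa using this)
    · intro p q hpq
      have key : ∑ c : Fin (orthRank G * orthRank H),
          (starRingEnd ℂ) (u' p.1 (finProdFinEquiv.symm c).1 * w' p.2 (finProdFinEquiv.symm c).2) *
          (u' q.1 (finProdFinEquiv.symm c).1 * w' q.2 (finProdFinEquiv.symm c).2)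
          = ∑ ab : Fin (orthRank G) × Fin (orthRank H),
            (starRingEnd ℂ) (u' p.1 ab.1 * w' p.2 ab.2) * (u' q.1 ab.1 * w' q.2 ab.2) := by
        rw [← finProdFinEquiv.sum_comp]
        simp
      rw [key]
      refine (tensor_inner (u' p.1) (u' q.1) (w' p.2) (w' q.2)).trans ?_
      rcases hpq with h | h
      · exact mul_eq_zero_of_left (hu' _ _ h) _
      · exact mul_eq_zero_of_right _ (hw' _ _ h)
end

section
/- Let d be a multiple of 4 with d > 4. Let N_d be the set of vectors x : Fin d → ℤ with every entry equal to 1 or −1 and with an even number of entries equal to −1, and let Y_d be the simple graph on N_d in which distinct x, y are adjacent iff ∑_i x i * y i = 0. Then: (a) any two distinct vertices of Y_d are adjacent or have a common neighbor; and (b) there exist two distinct nonadjacent vertices of Y_d. Hence the diameter of Y_d equals 2. -/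
/-- The vertex set of the Newman graph: `±1`-vectors of length `d` with an even
number of entries equal to `-1`. -/
def NewmanVert (d : ℕ) : Type :=
  {x : Fin d → ℤ // (∀ i, x i = 1 ∨ x i = -1) ∧
    Even ((Finset.univ.filter (fun i => x i = -1)).card)}

/-- The Newman graph `Y_d`: distinct vertices are adjacent iff the corresponding
vectors are orthogonal. -/
def newmanGraph (d : ℕ) : SimpleGraph (NewmanVert d) where
  Adj x y := x ≠ y ∧ ∑ i, x.val i * y.val i = 0
  symm := by
    constructor
    rintro x y ⟨hne, hdot⟩
    refine ⟨hne.symm, ?_⟩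
    rw [Finset.sum_congr rfl fun i _ => mul_comm (y.val i) (x.val i)]
    exact hdot
  loopless := by constructor; rintro x ⟨h, -⟩; exact h rfl

namespace NewmanAux

open scoped symmDiff

variable {d : ℕ}

/-- The set of coordinates where two vectors differ. -/
def diffSet (x y : Fin d → ℤ) : Finset (Fin d) :=
  Finset.univ.filter (fun i => x i ≠ y i)

lemma diffSet_comm (x y : Fin d → ℤ) : diffSet x y = diffSet y x := by
  ext i; simp [diffSet, ne_comm]

lemma dot_eq (x y : Fin d → ℤ) (hx : ∀ i, x i = 1 ∨ x i = -1)
    (hy : ∀ i, y i = 1 ∨ y i = -1) :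
    ∑ i, x i * y i = (d : ℤ) - 2 * ((diffSet x y).card : ℤ) := by
  classical
  have hterm : ∀ i ∈ Finset.univ, x i * y i = if x i = y i then (1 : ℤ) else -1 := by
    intro i _
    by_cases h : x i = y i
    · rcases hy i with h1 | h1 <;> simp [h, h1]
    · rcases hx i with h1 | h1 <;> rcases hy i with h2 | h2 <;> simp_all
  rw [Finset.sum_congr rfl hterm, Finset.sum_ite, Finset.sum_const, Finset.sum_const]
  have hc := Finset.card_filter_add_card_filter_not
    (s := (Finset.univ : Finset (Fin d))) (p := fun i => x i = y i)
  have hD : (diffSet x y).card = (Finset.univ.filter (fun i => ¬ x i = y i)).card := by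
    simp [diffSet, ne_eq]
  simp only [Finset.card_univ, Fintype.card_fin] at hc
  rw [hD]
  simp only [smul_eq_mul, nsmul_eq_mul, mul_one, mul_neg_one]
  push_cast
  omega

lemma card_symmDiff_aux (A B : Finset (Fin d)) :
    (A ∆ B).card + 2 * (A ∩ B).card = A.card + B.card := by
  have h1 : (A ∆ B) = (A ∪ B) \ (A ∩ B) := by
    rw [symmDiff_eq_sup_sdiff_inf]; simp
  have h2 : (A ∩ B) ⊆ (A ∪ B) := Finset.inter_subset_union
  have h3 := Finset.card_le_card h2
  have h4 := Finset.card_union_add_card_inter A B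
  rw [h1, Finset.card_sdiff_of_subset h2]
  omega

lemma even_symmDiff {A B : Finset (Fin d)} (hA : Even A.card) (hB : Even B.card) :
    Even ((A ∆ B).card) := by
  have := card_symmDiff_aux A B
  rw [Nat.even_iff] at *
  omega

/-- Flip the entries of `x` on the set `S`. -/
def flip (x : Fin d → ℤ) (S : Finset (Fin d)) : Fin d → ℤ :=
  fun i => if i ∈ S then -x i else x i

lemma flip_pm (x : Fin d → ℤ) (hx : ∀ i, x i = 1 ∨ x i = -1) (S : Finset (Fin d)) :
    ∀ i, flip x S i = 1 ∨ flip x S i = -1 := by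
  intro i; unfold flip; split <;> rcases hx i with h | h <;> simp [h]

lemma flip_neg_filter (x : Fin d → ℤ) (hx : ∀ i, x i = 1 ∨ x i = -1) (S : Finset (Fin d)) :
    Finset.univ.filter (fun i => flip x S i = -1)
      = (Finset.univ.filter (fun i => x i = -1)) ∆ S := by
  ext i
  simp only [Finset.mem_filter, Finset.mem_univ, true_and, Finset.mem_symmDiff]
  by_cases h : i ∈ S <;> rcases hx i with h1 | h1 <;> simp [h, h1, flip] <;> omega

lemma diff_flip (x : Fin d → ℤ) (hx : ∀ i, x i = 1 ∨ x i = -1) (S : Finset (Fin d)) :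
    diffSet x (flip x S) = S := by
  ext i
  simp only [diffSet, Finset.mem_filter, Finset.mem_univ, true_and, flip, ne_eq]
  by_cases h : i ∈ S <;> rcases hx i with h1 | h1 <;> simp [h, h1] <;> omega

lemma diff_flip' (x y : Fin d → ℤ) (hx : ∀ i, x i = 1 ∨ x i = -1)
    (hy : ∀ i, y i = 1 ∨ y i = -1) (S : Finset (Fin d)) :
    diffSet y (flip x S) = S ∆ diffSet x y := by
  ext i
  simp only [diffSet, Finset.mem_filter, Finset.mem_univ, true_and, ne_eq,
    Finset.mem_symmDiff]
  by_cases h : i ∈ S <;> rcases hx i with h1 | h1 <;> rcases hy i with h2 | h2 <;>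
    simp [h, h1, h2, flip] <;> omega

lemma diffSet_eq_symmDiff (x y : Fin d → ℤ) (hx : ∀ i, x i = 1 ∨ x i = -1)
    (hy : ∀ i, y i = 1 ∨ y i = -1) :
    diffSet x y = (Finset.univ.filter (fun i => x i = -1))
      ∆ (Finset.univ.filter (fun i => y i = -1)) := by
  ext i
  simp only [diffSet, Finset.mem_filter, Finset.mem_univ, true_and, ne_eq,
    Finset.mem_symmDiff]
  rcases hx i with h1 | h1 <;> rcases hy i with h2 | h2 <;> simp [h1, h2] <;> omega

lemma ne_of_diff {n : ℕ} {a b : NewmanVert n} (h : (diffSet a.1 b.1).Nonempty) :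
    a ≠ b := by
  rintro rfl
  obtain ⟨i, hi⟩ := h
  simp [diffSet] at hi

lemma diff_nonempty_of_ne {n : ℕ} {a b : NewmanVert n} (h : a ≠ b) :
    (diffSet a.1 b.1).Nonempty := by
  by_contra hc
  rw [Finset.not_nonempty_iff_eq_empty, diffSet, Finset.filter_eq_empty_iff] at hc
  exact h (Subtype.ext (funext fun i => not_not.mp (hc (Finset.mem_univ i))))

end NewmanAux

open NewmanAux in
open scoped symmDiff in
theorem stmt_16 (d : ℕ) (hd4 : 4 ∣ d) (hd : 4 < d) :
    (∀ x y : NewmanVert d, x ≠ y →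
      ((newmanGraph d).Adj x y ∨
        ∃ z : NewmanVert d, (newmanGraph d).Adj x z ∧ (newmanGraph d).Adj z y)) ∧
    (∃ x y : NewmanVert d, x ≠ y ∧ ¬ (newmanGraph d).Adj x y) ∧
    (newmanGraph d).ediam = 2 := by
  obtain ⟨m, rfl⟩ := hd4
  have hm : 2 ≤ m := by omega
  -- building vertices by flipping an even set of coordinates
  have mkvert : ∀ (x : NewmanVert (4 * m)) (S : Finset (Fin (4 * m))), Even S.card →
      ∃ z : NewmanVert (4 * m), z.1 = flip x.1 S := by
    intro x S hS
    refine ⟨⟨flip x.1 S, flip_pm x.1 x.2.1 S, ?_⟩, rfl⟩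
    rw [flip_neg_filter x.1 x.2.1 S]
    exact even_symmDiff x.2.2 hS
  -- part (a)
  have key : ∀ x y : NewmanVert (4 * m), x ≠ y →
      ((newmanGraph (4 * m)).Adj x y ∨
        ∃ z : NewmanVert (4 * m), (newmanGraph (4 * m)).Adj x z ∧
          (newmanGraph (4 * m)).Adj z y) := by
    intro x y hxy
    set D := diffSet x.1 y.1 with hD
    have hkeven : Even D.card := by
      rw [hD, diffSet_eq_symmDiff x.1 y.1 x.2.1 y.2.1]
      exact even_symmDiff x.2.2 y.2.2
    have hkpos : 0 < D.card := Finset.card_pos.mpr (diff_nonempty_of_ne hxy)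
    have hkle : D.card ≤ 4 * m := by
      have := Finset.card_le_univ D; simpa using this
    by_cases hk : D.card = 2 * m
    · left
      refine ⟨hxy, ?_⟩
      rw [dot_eq x.1 y.1 x.2.1 y.2.1, ← hD, hk]
      push_cast; ring
    · right
      obtain ⟨j, hj⟩ := hkeven
      have hj' : D.card = 2 * j := by omega
      obtain ⟨S1, hS1sub, hS1card⟩ := Finset.exists_subset_card_eq
        (show j ≤ D.card by omega)
      have hcompl : Dᶜ.card = 4 * m - D.card := by
        rw [Finset.card_compl]; simp
      obtain ⟨S2, hS2sub, hS2card⟩ := Finset.exists_subset_card_eq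
        (show 2 * m - j ≤ Dᶜ.card by omega)
      have hdisj : Disjoint S1 S2 := by
        refine Finset.disjoint_left.mpr fun i h1 h2 => ?_
        exact (Finset.mem_compl.mp (hS2sub h2)) (hS1sub h1)
      set S := S1 ∪ S2 with hSdef
      have hScard : S.card = 2 * m := by
        rw [hSdef, Finset.card_union_of_disjoint hdisj]; omega
      have hSD : S ∩ D = S1 := by
        have hS2D : Disjoint S2 D := Finset.disjoint_left.mpr fun i h2 hD' =>
          (Finset.mem_compl.mp (hS2sub h2)) hD'
        rw [hSdef, Finset.union_inter_distrib_right,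
          Finset.inter_eq_left.mpr hS1sub,
          Finset.disjoint_iff_inter_eq_empty.mp hS2D, Finset.union_empty]
      have hSDcard : (S ∆ D).card = 2 * m := by
        have := card_symmDiff_aux S D
        rw [hSD, hS1card, hScard] at this
        omega
      obtain ⟨z, hz⟩ := mkvert x S (by rw [hScard]; exact even_two_mul m)
      have hdxz : diffSet x.1 z.1 = S := by rw [hz]; exact diff_flip x.1 x.2.1 S
      have hdyz : diffSet y.1 z.1 = S ∆ D := by
        rw [hz]; exact diff_flip' x.1 y.1 x.2.1 y.2.1 S
      have hzx : x ≠ z := ne_of_diff (by rw [hdxz]; exact Finset.card_pos.mp (by omega))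
      have hzy : z ≠ y := fun h => (ne_of_diff (a := y) (b := z)
        (by rw [hdyz]; exact Finset.card_pos.mp (by omega))) h.symm
      refine ⟨z, ⟨hzx, ?_⟩, ⟨hzy, ?_⟩⟩
      · rw [dot_eq x.1 z.1 x.2.1 z.2.1, hdxz, hScard]; push_cast; ring
      · rw [dot_eq z.1 y.1 z.2.1 y.2.1, diffSet_comm, hdyz, hSDcard]; push_cast; ring
  -- part (b): a nonadjacent pair
  have hx0 : ∃ x0 : NewmanVert (4 * m), x0.1 = fun _ => 1 := by
    refine ⟨⟨fun _ => 1, fun i => Or.inl rfl, ?_⟩, rfl⟩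
    have : (Finset.univ.filter (fun _ : Fin (4 * m) => (1 : ℤ) = -1)) = ∅ := by
      apply Finset.filter_eq_empty_iff.mpr; intro i _; norm_num
    rw [this]; exact Even.zero
  obtain ⟨x0, hx0⟩ := hx0
  have h01 : (⟨0, by omega⟩ : Fin (4 * m)) ≠ ⟨1, by omega⟩ := by
    simp [Fin.ext_iff]
  set S0 : Finset (Fin (4 * m)) := {⟨0, by omega⟩, ⟨1, by omega⟩} with hS0
  have hS0card : S0.card = 2 := Finset.card_pair h01
  obtain ⟨y0, hy0⟩ := mkvert x0 S0 (by rw [hS0card]; exact even_two)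
  have hdxy0 : diffSet x0.1 y0.1 = S0 := by rw [hy0]; exact diff_flip x0.1 x0.2.1 S0
  have hne0 : x0 ≠ y0 := ne_of_diff (by rw [hdxy0]; exact Finset.card_pos.mp (by omega))
  have hnadj : ¬ (newmanGraph (4 * m)).Adj x0 y0 := by
    rintro ⟨-, hdot⟩
    rw [dot_eq x0.1 y0.1 x0.2.1 y0.2.1, hdxy0, hS0card] at hdot
    have : (4 * m : ℤ) - 2 * 2 = 0 := by push_cast at hdot ⊢; omega
    omega
  refine ⟨key, ⟨x0, y0, hne0, hnadj⟩, ?_⟩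
  apply le_antisymm
  · apply SimpleGraph.ediam_le_of_edist_le
    intro u v
    by_cases h : u = v
    · subst h; simp
    · rcases key u v h with hadj | ⟨z, h1, h2⟩
      · calc (newmanGraph (4 * m)).edist u v = 1 :=
            SimpleGraph.edist_eq_one_iff_adj.mpr hadj
          _ ≤ 2 := by norm_num
      · calc (newmanGraph (4 * m)).edist u v
            ≤ (newmanGraph (4 * m)).edist u z + (newmanGraph (4 * m)).edist z v :=
            SimpleGraph.edist_triangle
          _ ≤ 1 + 1 := add_le_add
              (le_of_eq (SimpleGraph.edist_eq_one_iff_adj.mpr h1))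
              (le_of_eq (SimpleGraph.edist_eq_one_iff_adj.mpr h2))
          _ = 2 := by norm_num
  · have h0 : (newmanGraph (4 * m)).edist x0 y0 ≠ 0 := by
      intro h; exact hne0 (SimpleGraph.edist_eq_zero_iff.mp h)
    have h1 : (newmanGraph (4 * m)).edist x0 y0 ≠ 1 := by
      intro h; exact hnadj (SimpleGraph.edist_eq_one_iff_adj.mp h)
    have h2 : 2 ≤ (newmanGraph (4 * m)).edist x0 y0 := by
      have hge1 : 1 ≤ (newmanGraph (4 * m)).edist x0 y0 := ENat.one_le_iff_ne_zero.mpr h0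
      have hlt : 1 < (newmanGraph (4 * m)).edist x0 y0 := lt_of_le_of_ne hge1 (Ne.symm h1)
      exact Order.add_one_le_of_lt hlt
    exact le_trans h2 SimpleGraph.edist_le_ediam
end
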